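/- Van der Sluis theorem: Let A be an n×m full-rank matrix with n ≤ m, let E be the diagonal matrix whose i-th diagonal entry is the inverse of the 2-norm of the i-th row of A (row equilibration), and let P be any invertible diagonal n×n matrix. Then κ(EA) ≤ √n · κ(PA), where κ denotes the ratio of largest to smallest singular value. -/

import Mathlib

open Matrix

noncomputable def singVals {n m : ℕ} (A : Matrix (Fin n) (Fin m) ℝ) : Fin n → ℝ :=
  fun i => Real.sqrt ((Matrix.isHermitian_mul_conjTranspose_self A).eigenvalues i)

noncomputable def condNum {n m : ℕ} (A : Matrix (Fin n) (Fin m) ℝ) : ℝ :=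
  (⨆ i, singVals A i) / (⨅ i, singVals A i)

namespace VdS

variable {n m : ℕ}

noncomputable def eigs (B : Matrix (Fin n) (Fin m) ℝ) : Fin n → ℝ :=
  (Matrix.isHermitian_mul_conjTranspose_self B).eigenvalues

lemma eigs_nonneg (B : Matrix (Fin n) (Fin m) ℝ) (i : Fin n) : 0 ≤ eigs B i :=
  Matrix.eigenvalues_self_mul_conjTranspose_nonneg B i

lemma dot_mulVec_decomp (H : Matrix (Fin n) (Fin n) ℝ) (hH : H.IsHermitian) (x : Fin n → ℝ) :
    ∃ y : Fin n → ℝ, x ⬝ᵥ (H *ᵥ x) = ∑ i, hH.eigenvalues i * y i ^ 2 ∧ x ⬝ᵥ x = ∑ i, y i ^ 2 := by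
  classical
  set U : Matrix (Fin n) (Fin n) ℝ := (hH.eigenvectorUnitary : Matrix (Fin n) (Fin n) ℝ) with hU
  have hUU : U * star U = 1 := (Matrix.mem_unitaryGroup_iff).mp hH.eigenvectorUnitary.2
  set y : Fin n → ℝ := star U *ᵥ x with hy
  have hxy : ∀ w, x ⬝ᵥ (U *ᵥ w) = y ⬝ᵥ w := by
    intro w
    rw [Matrix.dotProduct_mulVec, hy]
    congr 1
    ext i
    simp [Matrix.vecMul, Matrix.mulVec, dotProduct, conjTranspose_apply, mul_comm]
  refine ⟨y, ?_, ?_⟩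
  · conv_lhs => rw [hH.spectral_theorem, Unitary.conjStarAlgAut_apply]
    rw [← Matrix.mulVec_mulVec, ← Matrix.mulVec_mulVec, hxy]
    show y ⬝ᵥ (Matrix.diagonal _ *ᵥ y) = _
    simp [dotProduct, Matrix.mulVec, Matrix.diagonal, pow_two, Finset.mul_sum]
    apply Finset.sum_congr rfl
    intro i _
    ring
  · have : x ⬝ᵥ x = x ⬝ᵥ ((U * star U) *ᵥ x) := by rw [hUU]; simp
    rw [this, ← Matrix.mulVec_mulVec, hxy]
    simp [dotProduct, pow_two]
    rfl

lemma eigenvector_attains (H : Matrix (Fin n) (Fin n) ℝ) (hH : H.IsHermitian) (i : Fin n) :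
    ∃ x : Fin n → ℝ, x ⬝ᵥ x = 1 ∧ x ⬝ᵥ (H *ᵥ x) = hH.eigenvalues i := by
  set v : EuclideanSpace ℝ (Fin n) := hH.eigenvectorBasis i with hv
  have hnorm : ‖v‖ = 1 := hH.eigenvectorBasis.orthonormal.1 i
  have hdot : (v : Fin n → ℝ) ⬝ᵥ (v : Fin n → ℝ) = 1 := by
    have h2 : (inner ℝ v v : ℝ) = 1 := by
      rw [real_inner_self_eq_norm_sq, hnorm]; norm_num
    rw [← h2, PiLp.inner_apply]
    simp [dotProduct, mul_comm]
    exact Finset.sum_congr rfl fun _ _ => (pow_two _).symm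
  refine ⟨v, hdot, ?_⟩
  have hmul : H *ᵥ (v : Fin n → ℝ) = hH.eigenvalues i • (v : Fin n → ℝ) := by
    rw [hv]; exact hH.mulVec_eigenvectorBasis i
  rw [hmul, dotProduct_smul, hdot, smul_eq_mul, mul_one]

lemma trace_eq_sum_eigs (H : Matrix (Fin n) (Fin n) ℝ) (hH : H.IsHermitian) :
    H.trace = ∑ i, hH.eigenvalues i := by
  classical
  set U : Matrix (Fin n) (Fin n) ℝ := (hH.eigenvectorUnitary : Matrix (Fin n) (Fin n) ℝ) with hU
  have hUU : star U * U = 1 := (Matrix.mem_unitaryGroup_iff').mp hH.eigenvectorUnitary.2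
  conv_lhs => rw [hH.spectral_theorem, Unitary.conjStarAlgAut_apply]
  rw [Matrix.trace_mul_cycle, ← hU, hUU, Matrix.one_mul]
  simp [Matrix.trace_diagonal]

variable [NeZero n]

lemma rayleigh_upper (H : Matrix (Fin n) (Fin n) ℝ) (hH : H.IsHermitian) (x : Fin n → ℝ) :
    x ⬝ᵥ (H *ᵥ x) ≤ (⨆ i, hH.eigenvalues i) * (x ⬝ᵥ x) := by
  obtain ⟨y, h1, h2⟩ := dot_mulVec_decomp H hH x
  rw [h1, h2, Finset.mul_sum]
  refine Finset.sum_le_sum fun i _ => ?_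
  exact mul_le_mul_of_nonneg_right
    (le_ciSup (Set.Finite.bddAbove (Set.finite_range _)) i) (sq_nonneg _)

lemma rayleigh_lower (H : Matrix (Fin n) (Fin n) ℝ) (hH : H.IsHermitian) (x : Fin n → ℝ) :
    (⨅ i, hH.eigenvalues i) * (x ⬝ᵥ x) ≤ x ⬝ᵥ (H *ᵥ x) := by
  obtain ⟨y, h1, h2⟩ := dot_mulVec_decomp H hH x
  rw [h1, h2, Finset.mul_sum]
  refine Finset.sum_le_sum fun i _ => ?_
  exact mul_le_mul_of_nonneg_right
    (ciInf_le (Set.Finite.bddBelow (Set.finite_range _)) i) (sq_nonneg _)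

lemma single_dot (H : Matrix (Fin n) (Fin n) ℝ) (i : Fin n) :
    Pi.single i 1 ⬝ᵥ (H *ᵥ Pi.single i 1) = H i i := by
  classical
  simp [Matrix.mulVec, dotProduct, Pi.single_apply]

lemma single_dot_self (i : Fin n) :
    (Pi.single i 1 : Fin n → ℝ) ⬝ᵥ Pi.single i 1 = 1 := by
  classical
  simp [dotProduct, Pi.single_apply]

lemma mul_conjTranspose_diag (B : Matrix (Fin n) (Fin m) ℝ) (i : Fin n) :
    (B * Bᴴ) i i = ∑ j, B i j ^ 2 := by
  simp [Matrix.mul_apply, Matrix.conjTranspose_apply, pow_two]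

lemma diag_le_sup (B : Matrix (Fin n) (Fin m) ℝ) (i : Fin n) :
    (∑ j, B i j ^ 2) ≤ ⨆ j, eigs B j := by
  have h := rayleigh_upper (B * Bᴴ) (Matrix.isHermitian_mul_conjTranspose_self B) (Pi.single i 1)
  rw [single_dot, single_dot_self, mul_one, mul_conjTranspose_diag] at h
  exact h

lemma diag_ge_inf (B : Matrix (Fin n) (Fin m) ℝ) (i : Fin n) :
    (⨅ j, eigs B j) ≤ ∑ j, B i j ^ 2 := by
  have h := rayleigh_lower (B * Bᴴ) (Matrix.isHermitian_mul_conjTranspose_self B) (Pi.single i 1)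
  rw [single_dot, single_dot_self, mul_one, mul_conjTranspose_diag] at h
  exact h

lemma eigs_pos (B : Matrix (Fin n) (Fin m) ℝ) (hr : B.rank = n) (i : Fin n) :
    0 < eigs B i := by
  rcases lt_or_eq_of_le (eigs_nonneg B i) with h | h
  · exact h
  exfalso
  have hcard := (Matrix.isHermitian_mul_conjTranspose_self B).rank_eq_card_non_zero_eigs
  have hrk : (B * Bᴴ).rank = n := by rw [Matrix.rank_self_mul_conjTranspose, hr]
  have hlt : Fintype.card {j // (Matrix.isHermitian_mul_conjTranspose_self B).eigenvalues j ≠ 0}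
      < Fintype.card (Fin n) := Fintype.card_subtype_lt (x := i) (by simp only [ne_eq, not_not]; exact h.symm)
  rw [← hcard, hrk, Fintype.card_fin] at hlt
  exact lt_irrefl _ hlt

lemma inf_eigs_pos (B : Matrix (Fin n) (Fin m) ℝ) (hr : B.rank = n) :
    0 < ⨅ j, eigs B j := by
  obtain ⟨i₀, h⟩ := exists_eq_ciInf_of_finite (f := eigs B)
  rw [← h]; exact eigs_pos B hr i₀

lemma inf_le_sup_eigs (B : Matrix (Fin n) (Fin m) ℝ) :
    (⨅ j, eigs B j) ≤ ⨆ j, eigs B j := by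
  obtain ⟨i₀, h⟩ := exists_eq_ciInf_of_finite (f := eigs B)
  rw [← h]
  exact le_ciSup (Set.Finite.bddAbove (Set.finite_range _)) i₀

lemma sup_eigs_le_of_unit_rows (B : Matrix (Fin n) (Fin m) ℝ)
    (h : ∀ i, ∑ j, B i j ^ 2 = 1) : (⨆ j, eigs B j) ≤ n := by
  obtain ⟨i₀, hsup⟩ := exists_eq_ciSup_of_finite (f := eigs B)
  rw [← hsup]
  calc eigs B i₀ ≤ ∑ i, eigs B i :=
        Finset.single_le_sum (fun i _ => eigs_nonneg B i) (Finset.mem_univ i₀)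
    _ = (B * Bᴴ).trace := (trace_eq_sum_eigs _ _).symm
    _ = ∑ i, ∑ j, B i j ^ 2 := by
        rw [Matrix.trace]
        exact Finset.sum_congr rfl fun i _ => mul_conjTranspose_diag B i
    _ = n := by simp [h]

lemma lower_bound (C : Matrix (Fin n) (Fin m) ℝ) (d : Fin n → ℝ)
    (hd : ∀ i, (⨆ j, eigs C j)⁻¹ ≤ d i ^ 2) :
    (⨅ j, eigs C j) * (⨆ j, eigs C j)⁻¹ ≤ ⨅ j, eigs (Matrix.diagonal d * C) j := by
  classical
  set B := Matrix.diagonal d * C with hB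
  obtain ⟨i₀, hinf⟩ := exists_eq_ciInf_of_finite (f := eigs B)
  obtain ⟨x, hx1, hx2⟩ := eigenvector_attains (B * Bᴴ)
    (Matrix.isHermitian_mul_conjTranspose_self B) i₀
  rw [← hinf]
  have hIC : 0 ≤ ⨅ j, eigs C j := by
    obtain ⟨i₁, h⟩ := exists_eq_ciInf_of_finite (f := eigs C)
    rw [← h]; exact eigs_nonneg C i₁
  have hHB : B * Bᴴ = Matrix.diagonal d * (C * Cᴴ) * Matrix.diagonal d := by
    rw [hB, Matrix.conjTranspose_mul, Matrix.diagonal_conjTranspose]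
    have : star d = d := by ext i; simp
    rw [this]
    simp only [Matrix.mul_assoc]
  set z : Fin n → ℝ := fun i => d i * x i with hz
  have hxz : x ⬝ᵥ ((B * Bᴴ) *ᵥ x) = z ⬝ᵥ ((C * Cᴴ) *ᵥ z) := by
    rw [hHB, ← Matrix.mulVec_mulVec, ← Matrix.mulVec_mulVec]
    have h1 : Matrix.diagonal d *ᵥ x = z := by
      ext i; simp [Matrix.mulVec_diagonal, hz]
    have h2 : ∀ w, x ⬝ᵥ (Matrix.diagonal d *ᵥ w) = z ⬝ᵥ w := by
      intro w
      simp only [dotProduct, Matrix.mulVec_diagonal, hz]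
      exact Finset.sum_congr rfl fun j _ => by ring
    rw [h1, h2]
  have hray := rayleigh_lower (C * Cᴴ) (Matrix.isHermitian_mul_conjTranspose_self C) z
  have hzz : (⨆ j, eigs C j)⁻¹ ≤ z ⬝ᵥ z := by
    have : z ⬝ᵥ z = ∑ i, d i ^ 2 * x i ^ 2 := by
      simp [dotProduct, hz]; ring_nf
    rw [this]
    calc (⨆ j, eigs C j)⁻¹ = ∑ i, (⨆ j, eigs C j)⁻¹ * x i ^ 2 := by
          rw [← Finset.mul_sum]
          have : ∑ i, x i ^ 2 = 1 := by
            rw [← hx1]; simp [dotProduct, pow_two]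
          rw [this, mul_one]
      _ ≤ ∑ i, d i ^ 2 * x i ^ 2 :=
          Finset.sum_le_sum fun i _ => mul_le_mul_of_nonneg_right (hd i) (sq_nonneg _)
  calc (⨅ j, eigs C j) * (⨆ j, eigs C j)⁻¹
      ≤ (⨅ j, eigs C j) * (z ⬝ᵥ z) := mul_le_mul_of_nonneg_left hzz hIC
    _ ≤ z ⬝ᵥ ((C * Cᴴ) *ᵥ z) := hray
    _ = x ⬝ᵥ ((B * Bᴴ) *ᵥ x) := hxz.symm
    _ = eigs B i₀ := hx2

lemma ciSup_sqrt (f : Fin n → ℝ) :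
    (⨆ i, Real.sqrt (f i)) = Real.sqrt (⨆ i, f i) := by
  obtain ⟨i₀, h⟩ : ∃ i₀, f i₀ = ⨆ i, f i := exists_eq_ciSup_of_finite
  apply le_antisymm
  · exact ciSup_le fun i =>
      Real.sqrt_le_sqrt (le_ciSup (Set.Finite.bddAbove (Set.finite_range _)) i)
  · rw [← h]
    exact le_ciSup (f := fun i => Real.sqrt (f i))
      (Set.Finite.bddAbove (Set.finite_range _)) i₀

lemma ciInf_sqrt (f : Fin n → ℝ) :
    (⨅ i, Real.sqrt (f i)) = Real.sqrt (⨅ i, f i) := by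
  obtain ⟨i₀, h⟩ : ∃ i₀, f i₀ = ⨅ i, f i := exists_eq_ciInf_of_finite
  apply le_antisymm
  · rw [← h]
    exact ciInf_le (f := fun i => Real.sqrt (f i))
      (Set.Finite.bddBelow (Set.finite_range _)) i₀
  · exact le_ciInf fun i =>
      Real.sqrt_le_sqrt (ciInf_le (Set.Finite.bddBelow (Set.finite_range _)) i)

lemma condNum_eq (B : Matrix (Fin n) (Fin m) ℝ) :
    condNum B = Real.sqrt (⨆ i, eigs B i) / Real.sqrt (⨅ i, eigs B i) := by
  rw [condNum]
  rw [show (fun i => singVals B i) = fun i => Real.sqrt (eigs B i) from rfl]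
  rw [ciSup_sqrt, ciInf_sqrt]

end VdS

theorem van_der_sluis {n m : ℕ} [NeZero n] (hnm : n ≤ m)
    (A : Matrix (Fin n) (Fin m) ℝ) (hrank : A.rank = n)
    (E : Matrix (Fin n) (Fin n) ℝ)
    (hE : E = Matrix.diagonal fun i => (Real.sqrt (∑ j, A i j ^ 2))⁻¹)
    (p : Fin n → ℝ) (hp : ∀ i, p i ≠ 0) :
    condNum (E * A) ≤ Real.sqrt n * condNum (Matrix.diagonal p * A) := by
  classical
  open VdS in
  -- rows of A are nonzero
  have hrow : ∀ i, 0 < ∑ j, A i j ^ 2 := by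
    intro i
    have h1 := VdS.diag_ge_inf A i
    have h2 := VdS.inf_eigs_pos A hrank
    linarith
  set e : Fin n → ℝ := fun i => (Real.sqrt (∑ j, A i j ^ 2))⁻¹ with he
  have hepos : ∀ i, 0 < e i := fun i => inv_pos.mpr (Real.sqrt_pos.mpr (hrow i))
  have hesq : ∀ i, e i ^ 2 = (∑ j, A i j ^ 2)⁻¹ := by
    intro i
    rw [he]
    simp only []
    rw [← Real.sqrt_inv, Real.sq_sqrt (by positivity)]
  set B := E * A with hBdef
  set C := Matrix.diagonal p * A with hCdef
  set d : Fin n → ℝ := fun i => e i / p i with hd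
  -- B = diagonal d * C
  have hBC : B = Matrix.diagonal d * C := by
    rw [hBdef, hCdef, hE, ← Matrix.mul_assoc, Matrix.diagonal_mul_diagonal]
    congr 1
    apply congrArg
    ext i
    exact (div_mul_cancel₀ (e i) (hp i)).symm
  -- ranks
  have hdetE : IsUnit (Matrix.diagonal e).det := by
    rw [Matrix.det_diagonal]
    exact (Finset.prod_pos fun i _ => hepos i).ne'.isUnit
  have hdetP : IsUnit (Matrix.diagonal p).det := by
    rw [Matrix.det_diagonal]
    exact (Finset.prod_ne_zero_iff.mpr fun i _ => hp i).isUnit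
  have hrankB : B.rank = n := by
    rw [hBdef, hE, Matrix.rank_mul_eq_right_of_isUnit_det _ _ hdetE, hrank]
  have hrankC : C.rank = n := by
    rw [hCdef, Matrix.rank_mul_eq_right_of_isUnit_det _ _ hdetP, hrank]
  -- unit rows of B
  have hunit : ∀ i, ∑ j, B i j ^ 2 = 1 := by
    intro i
    have hBij : ∀ j, B i j = e i * A i j := by
      intro j
      rw [hBdef, hE, Matrix.mul_apply]
      simp [Matrix.diagonal, Finset.sum_ite_eq, he]
    calc ∑ j, B i j ^ 2 = ∑ j, e i ^ 2 * A i j ^ 2 := by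
          refine Finset.sum_congr rfl fun j _ => ?_; rw [hBij j]; ring
      _ = e i ^ 2 * ∑ j, A i j ^ 2 := by rw [← Finset.mul_sum]
      _ = 1 := by rw [hesq i, inv_mul_cancel₀ (hrow i).ne']
  -- diag entries of C * Cᴴ
  have hCdiag : ∀ i, ∑ j, C i j ^ 2 = p i ^ 2 * ∑ j, A i j ^ 2 := by
    intro i
    have hCij : ∀ j, C i j = p i * A i j := by
      intro j
      rw [hCdef, Matrix.mul_apply]
      simp [Matrix.diagonal, Finset.sum_ite_eq]
    rw [Finset.mul_sum]
    refine Finset.sum_congr rfl fun j _ => ?_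
    rw [hCij j]; ring
  -- main quantities
  set SB := ⨆ i, VdS.eigs B i with hSB
  set IB := ⨅ i, VdS.eigs B i with hIB
  set SC := ⨆ i, VdS.eigs C i with hSC
  set IC := ⨅ i, VdS.eigs C i with hIC
  have hICpos : 0 < IC := VdS.inf_eigs_pos C hrankC
  have hSCpos : 0 < SC := lt_of_lt_of_le hICpos (VdS.inf_le_sup_eigs C)
  have hIBpos : 0 < IB := VdS.inf_eigs_pos B hrankB
  have hSBn : SB ≤ n := VdS.sup_eigs_le_of_unit_rows B hunit
  have hSBpos : 0 < SB := lt_of_lt_of_le hIBpos (VdS.inf_le_sup_eigs B)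
  -- d i ^ 2 ≥ SC⁻¹
  have hdge : ∀ i, SC⁻¹ ≤ d i ^ 2 := by
    intro i
    have h1 : ∑ j, C i j ^ 2 ≤ SC := VdS.diag_le_sup C i
    have h2 : 0 < ∑ j, C i j ^ 2 := by
      rw [hCdiag i]
      exact mul_pos (by exact pow_pos (abs_pos.mpr (hp i)) 2 |>.trans_eq (by rw [sq_abs])) (hrow i)
    have h3 : d i ^ 2 = (∑ j, C i j ^ 2)⁻¹ := by
      rw [hCdiag i, hd]
      simp only []
      rw [div_pow, hesq i]
      field_simp
    rw [h3]
    exact inv_anti₀ h2 h1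
  have hkey : IC * SC⁻¹ ≤ IB := by
    have := VdS.lower_bound C d hdge
    rw [← hBC] at this
    exact this
  -- conclude
  rw [VdS.condNum_eq, VdS.condNum_eq, ← hSB, ← hIB, ← hSC, ← hIC]
  have hfrac : SB / IB ≤ (n : ℝ) * (SC / IC) := by
    have h1 : SB / IB ≤ (n : ℝ) / (IC * SC⁻¹) :=
      div_le_div₀ (by positivity) hSBn (by positivity) hkey
    have h2 : (n : ℝ) / (IC * SC⁻¹) = (n : ℝ) * (SC / IC) := by
      field_simp
    linarith [h1, h2.le]
  calc Real.sqrt SB / Real.sqrt IB = Real.sqrt (SB / IB) := (Real.sqrt_div hSBpos.le _).symm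
    _ ≤ Real.sqrt ((n : ℝ) * (SC / IC)) := Real.sqrt_le_sqrt hfrac
    _ = Real.sqrt n * Real.sqrt (SC / IC) := Real.sqrt_mul (by positivity) _
    _ = Real.sqrt n * (Real.sqrt SC / Real.sqrt IC) := by
        rw [Real.sqrt_div hSCpos.le]
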